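/- Let M ∈ R^{n_r × n_c}, A ∈ R^{n_r × r}, B ∈ R^{n_c × r}. If every row of A has Euclidean norm at most a and every row of B has Euclidean norm at most b, then the spectral norm satisfies ||M ∘ (A B^T)||_S ≤ a b ||M||_S, where ∘ is the Hadamard product. -/

import Mathlib

open Matrix
open scoped Matrix

/-- The spectral norm (largest singular value) of a real matrix. -/
noncomputable def specNorm {m n : ℕ} (M : Matrix (Fin m) (Fin n) ℝ) : ℝ :=
  ‖LinearMap.toContinuousLinearMap (Matrix.toEuclideanLin M)‖

lemma bilin_le_specNorm {m n : ℕ} (M : Matrix (Fin m) (Fin n) ℝ)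
    (x : Fin m → ℝ) (y : Fin n → ℝ) :
    |∑ i, ∑ j, x i * M i j * y j| ≤
      specNorm M * Real.sqrt (∑ i, (x i)^2) * Real.sqrt (∑ j, (y j)^2) := by
  set L := LinearMap.toContinuousLinearMap (Matrix.toEuclideanLin M) with hL
  let x' : EuclideanSpace ℝ (Fin m) := WithLp.toLp 2 x
  let y' : EuclideanSpace ℝ (Fin n) := WithLp.toLp 2 y
  have key : ∑ i, ∑ j, x i * M i j * y j = inner (𝕜 := ℝ) x' (L y') := by
    simp only [PiLp.inner_apply, RCLike.inner_apply, starRingEnd_apply, star_trivial]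
    refine Finset.sum_congr rfl fun i _ => ?_
    have hLy : L y' i = ∑ j, M i j * y j := by
      simp [hL, y', Matrix.toEuclideanLin_apply, Matrix.mulVec, dotProduct]
    rw [hLy, Finset.sum_mul]
    exact Finset.sum_congr rfl fun j _ => by simp only [x']; ring
  rw [key]
  have h1 : |inner (𝕜 := ℝ) x' (L y')| ≤ ‖x'‖ * ‖L y'‖ := abs_real_inner_le_norm _ _
  have h2 : ‖L y'‖ ≤ specNorm M * ‖y'‖ := L.le_opNorm _
  have hx2 : ‖x'‖ = Real.sqrt (∑ i, (x i)^2) := by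
    rw [EuclideanSpace.norm_eq]
    congr 1
    exact Finset.sum_congr rfl fun i _ => by rw [Real.norm_eq_abs, sq_abs]
  have hy2 : ‖y'‖ = Real.sqrt (∑ j, (y j)^2) := by
    rw [EuclideanSpace.norm_eq]
    congr 1
    exact Finset.sum_congr rfl fun i _ => by rw [Real.norm_eq_abs, sq_abs]
  calc |inner (𝕜 := ℝ) x' (L y')| ≤ ‖x'‖ * ‖L y'‖ := h1
    _ ≤ ‖x'‖ * (specNorm M * ‖y'‖) := mul_le_mul_of_nonneg_left h2 (norm_nonneg _)
    _ = specNorm M * Real.sqrt (∑ i, (x i)^2) * Real.sqrt (∑ j, (y j)^2) := by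
        rw [hx2, hy2]; ring

lemma specNorm_le_of_bilin {m n : ℕ} (M : Matrix (Fin m) (Fin n) ℝ) (C : ℝ) (hC : 0 ≤ C)
    (h : ∀ (x : Fin m → ℝ) (y : Fin n → ℝ),
      |∑ i, ∑ j, x i * M i j * y j| ≤
        C * Real.sqrt (∑ i, (x i)^2) * Real.sqrt (∑ j, (y j)^2)) :
    specNorm M ≤ C := by
  refine ContinuousLinearMap.opNorm_le_bound _ hC fun y => ?_
  set L := LinearMap.toContinuousLinearMap (Matrix.toEuclideanLin M) with hL
  set x : Fin m → ℝ := fun i => L y i with hxdef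
  have hLy : ∀ i, L y i = ∑ j, M i j * y j := fun i => by
    simp [hL, Matrix.toEuclideanLin_apply, Matrix.mulVec, dotProduct]
  have hsum : ∑ i, ∑ j, x i * M i j * y j = ∑ i, (x i)^2 := by
    refine Finset.sum_congr rfl fun i _ => ?_
    have h1 : ∑ j, x i * M i j * y j = x i * ∑ j, M i j * y j := by
      rw [Finset.mul_sum]; exact Finset.sum_congr rfl fun j _ => by ring
    rw [h1, ← hLy i]; exact (sq (x i)).symm ▸ rfl
  have hnorm : ‖L y‖ = Real.sqrt (∑ i, (x i)^2) := by
    rw [EuclideanSpace.norm_eq]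
    congr 1
    exact Finset.sum_congr rfl fun i _ => by rw [Real.norm_eq_abs, sq_abs]
  have hy2 : ‖y‖ = Real.sqrt (∑ j, (y j)^2) := by
    rw [EuclideanSpace.norm_eq]
    congr 1
    exact Finset.sum_congr rfl fun i _ => by rw [Real.norm_eq_abs, sq_abs]
  have hLsq : ‖L y‖^2 = ∑ i, (x i)^2 := by
    rw [hnorm, Real.sq_sqrt (by positivity)]
  have h2 : ‖L y‖^2 ≤ C * ‖L y‖ * ‖y‖ := by
    rw [hLsq, ← hsum]
    calc ∑ i, ∑ j, x i * M i j * y j ≤ |∑ i, ∑ j, x i * M i j * y j| := le_abs_self _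
      _ ≤ C * Real.sqrt (∑ i, (x i)^2) * Real.sqrt (∑ j, (y j)^2) := h x y
      _ = C * ‖L y‖ * ‖y‖ := by rw [hnorm, hy2]
  by_cases h0 : ‖L y‖ = 0
  · rw [h0]; positivity
  · have hpos : 0 < ‖L y‖ := lt_of_le_of_ne (norm_nonneg _) (Ne.symm h0)
    nlinarith [h2]

lemma specNorm_zero_dim {m n : ℕ} (M : Matrix (Fin m) (Fin n) ℝ) (h : m = 0 ∨ n = 0) :
    specNorm M = 0 := by
  have : LinearMap.toContinuousLinearMap (Matrix.toEuclideanLin M) = 0 := by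
    ext y i
    rcases h with h | h
    · exact absurd i.2 (by omega)
    · have hy : y = 0 := PiLp.ext fun (j : Fin n) => absurd j.2 (by omega)
      rw [hy]; simp
  rw [specNorm, this, norm_zero]

/-- **Lemma 5.3**: if every row of `A` has norm at most `a` and every row of `B`
has norm at most `b`, then `‖M ∘ (A Bᵀ)‖_S ≤ a b ‖M‖_S`. -/
theorem specNorm_hadamard_factored_le {nr nc r : ℕ}
    (M : Matrix (Fin nr) (Fin nc) ℝ)
    (A : Matrix (Fin nr) (Fin r) ℝ) (B : Matrix (Fin nc) (Fin r) ℝ)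
    (a b : ℝ)
    (hA : ∀ i : Fin nr, Real.sqrt (∑ k : Fin r, (A i k) ^ 2) ≤ a)
    (hB : ∀ j : Fin nc, Real.sqrt (∑ k : Fin r, (B j k) ^ 2) ≤ b) :
    specNorm (M ⊙ (A * Bᵀ)) ≤ a * b * specNorm M := by
  rcases Nat.eq_zero_or_pos nr with hnr | hnr
  · rw [specNorm_zero_dim _ (Or.inl hnr), specNorm_zero_dim M (Or.inl hnr), mul_zero]
  rcases Nat.eq_zero_or_pos nc with hnc | hnc
  · rw [specNorm_zero_dim _ (Or.inr hnc), specNorm_zero_dim M (Or.inr hnc), mul_zero]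
  have ha : 0 ≤ a := le_trans (Real.sqrt_nonneg _) (hA ⟨0, hnr⟩)
  have hb : 0 ≤ b := le_trans (Real.sqrt_nonneg _) (hB ⟨0, hnc⟩)
  have hM : 0 ≤ specNorm M := norm_nonneg _
  refine specNorm_le_of_bilin _ _ (by positivity) fun x y => ?_
  set p : Fin r → ℝ := fun k => Real.sqrt (∑ i, (x i * A i k)^2) with hp
  set q : Fin r → ℝ := fun k => Real.sqrt (∑ j, (y j * B j k)^2) with hq
  have expand : ∑ i, ∑ j, x i * (M ⊙ (A * Bᵀ)) i j * y j =
      ∑ k, ∑ i, ∑ j, (x i * A i k) * M i j * (y j * B j k) := by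
    have step : ∀ i j, x i * (M ⊙ (A * Bᵀ)) i j * y j =
        ∑ k, (x i * A i k) * M i j * (y j * B j k) := by
      intro i j
      simp only [Matrix.hadamard_apply, Matrix.mul_apply, Matrix.transpose_apply,
        Finset.mul_sum, Finset.sum_mul]
      exact Finset.sum_congr rfl fun k _ => by ring
    calc ∑ i, ∑ j, x i * (M ⊙ (A * Bᵀ)) i j * y j
        = ∑ i, ∑ k, ∑ j, (x i * A i k) * M i j * (y j * B j k) := by
          refine Finset.sum_congr rfl fun i _ => ?_
          rw [Finset.sum_comm]
          exact Finset.sum_congr rfl fun j _ => step i j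
      _ = ∑ k, ∑ i, ∑ j, (x i * A i k) * M i j * (y j * B j k) := Finset.sum_comm
  rw [expand]
  have hstep1 : |∑ k, ∑ i, ∑ j, (x i * A i k) * M i j * (y j * B j k)| ≤
      ∑ k, specNorm M * p k * q k := by
    refine le_trans (Finset.abs_sum_le_sum_abs _ _) (Finset.sum_le_sum fun k _ => ?_)
    exact bilin_le_specNorm M (fun i => x i * A i k) (fun j => y j * B j k)
  refine le_trans hstep1 ?_
  have hX : (0:ℝ) ≤ ∑ i, (x i)^2 := Finset.sum_nonneg fun i _ => sq_nonneg _
  have hY : (0:ℝ) ≤ ∑ j, (y j)^2 := Finset.sum_nonneg fun j _ => sq_nonneg _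
  have hcs : ∑ k, p k * q k ≤
      Real.sqrt (∑ k, (p k)^2) * Real.sqrt (∑ k, (q k)^2) := by
    have h1 : (∑ k, p k * q k)^2 ≤ (∑ k, (p k)^2) * (∑ k, (q k)^2) :=
      Finset.sum_mul_sq_le_sq_mul_sq Finset.univ p q
    have h2 : 0 ≤ ∑ k, p k * q k :=
      Finset.sum_nonneg fun k _ => mul_nonneg (Real.sqrt_nonneg _) (Real.sqrt_nonneg _)
    have h3 := Real.sqrt_le_sqrt h1
    rwa [Real.sqrt_sq h2, Real.sqrt_mul (Finset.sum_nonneg fun k _ => sq_nonneg _)] at h3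
  have hpsum : ∑ k, (p k)^2 ≤ a^2 * ∑ i, (x i)^2 := by
    have hA' : ∀ i, ∑ k, (A i k)^2 ≤ a^2 := fun i => by
      nlinarith [Real.sq_sqrt (show (0:ℝ) ≤ ∑ k, (A i k)^2 by positivity), hA i,
        Real.sqrt_nonneg (∑ k, (A i k)^2)]
    calc ∑ k, (p k)^2 = ∑ k, ∑ i, (x i * A i k)^2 := by
          refine Finset.sum_congr rfl fun k _ => ?_
          exact Real.sq_sqrt (Finset.sum_nonneg fun i _ => sq_nonneg _)
      _ = ∑ i, (x i)^2 * ∑ k, (A i k)^2 := by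
          rw [Finset.sum_comm]
          refine Finset.sum_congr rfl fun i _ => ?_
          rw [Finset.mul_sum]
          exact Finset.sum_congr rfl fun k _ => by ring
      _ ≤ ∑ i, (x i)^2 * a^2 := Finset.sum_le_sum fun i _ =>
          mul_le_mul_of_nonneg_left (hA' i) (sq_nonneg _)
      _ = a^2 * ∑ i, (x i)^2 := by rw [← Finset.sum_mul]; ring
  have hqsum : ∑ k, (q k)^2 ≤ b^2 * ∑ j, (y j)^2 := by
    have hB' : ∀ j, ∑ k, (B j k)^2 ≤ b^2 := fun j => by
      nlinarith [Real.sq_sqrt (show (0:ℝ) ≤ ∑ k, (B j k)^2 by positivity), hB j,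
        Real.sqrt_nonneg (∑ k, (B j k)^2)]
    calc ∑ k, (q k)^2 = ∑ k, ∑ j, (y j * B j k)^2 := by
          refine Finset.sum_congr rfl fun k _ => ?_
          exact Real.sq_sqrt (Finset.sum_nonneg fun j _ => sq_nonneg _)
      _ = ∑ j, (y j)^2 * ∑ k, (B j k)^2 := by
          rw [Finset.sum_comm]
          refine Finset.sum_congr rfl fun j _ => ?_
          rw [Finset.mul_sum]
          exact Finset.sum_congr rfl fun k _ => by ring
      _ ≤ ∑ j, (y j)^2 * b^2 := Finset.sum_le_sum fun j _ =>
          mul_le_mul_of_nonneg_left (hB' j) (sq_nonneg _)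
      _ = b^2 * ∑ j, (y j)^2 := by rw [← Finset.sum_mul]; ring
  have hpb : Real.sqrt (∑ k, (p k)^2) ≤ a * Real.sqrt (∑ i, (x i)^2) := by
    have := Real.sqrt_le_sqrt hpsum
    rwa [Real.sqrt_mul (sq_nonneg a), Real.sqrt_sq ha] at this
  have hqb : Real.sqrt (∑ k, (q k)^2) ≤ b * Real.sqrt (∑ j, (y j)^2) := by
    have := Real.sqrt_le_sqrt hqsum
    rwa [Real.sqrt_mul (sq_nonneg b), Real.sqrt_sq hb] at this
  calc ∑ k, specNorm M * p k * q k = specNorm M * ∑ k, p k * q k := by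
        rw [Finset.mul_sum]
        exact Finset.sum_congr rfl fun k _ => by ring
    _ ≤ specNorm M * (Real.sqrt (∑ k, (p k)^2) * Real.sqrt (∑ k, (q k)^2)) :=
        mul_le_mul_of_nonneg_left hcs hM
    _ ≤ specNorm M * ((a * Real.sqrt (∑ i, (x i)^2)) * (b * Real.sqrt (∑ j, (y j)^2))) := by
        have h4 : 0 ≤ Real.sqrt (∑ k, (p k)^2) := Real.sqrt_nonneg _
        have h5 : 0 ≤ b * Real.sqrt (∑ j, (y j)^2) := mul_nonneg hb (Real.sqrt_nonneg _)
        exact mul_le_mul_of_nonneg_left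
          (mul_le_mul hpb hqb (Real.sqrt_nonneg _) (le_trans h4 hpb)) hM
    _ = a * b * specNorm M * Real.sqrt (∑ i, (x i)^2) * Real.sqrt (∑ j, (y j)^2) := by ring
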